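/- Let (A, H) be a matched pair of quasigroupoids. Then φ_A(λ_H(φ_H(h,a)), λ_A(φ_A(h,a))) = λ_A(a) and φ_H(λ_H(φ_H(h,a)), λ_A(φ_A(h,a))) = λ_H(h) for all (h,a) with s_H(h) = t_A(a). -/
import Mathlib


/-- A quasigroupoid: objects `O`, arrows `A`, with a partial product `mul`
(meaningful on composable pairs, i.e. when `s a = t b`) and inverse map `inv`.
All axioms involving the product are guarded by composability hypotheses. -/
structure Quasigroupoid (O : Type*) (A : Type*) where
  s : A → O
  t : A → O
  e : O → A
  inv : A → A
  mul : A → A → A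
  s_e : ∀ x, s (e x) = x
  t_e : ∀ x, t (e x) = x
  e_mul : ∀ a, mul (e (t a)) a = a
  mul_e : ∀ a, mul a (e (s a)) = a
  s_mul : ∀ a b, s a = t b → s (mul a b) = s b
  t_mul : ∀ a b, s a = t b → t (mul a b) = t a
  inv_comp_left : ∀ a b, s a = t b → s (inv a) = t (mul a b)
  inv_mul_cancel : ∀ a b, s a = t b → mul (inv a) (mul a b) = b
  comp_inv_right : ∀ a b, s a = t b → s (mul a b) = t (inv b)
  mul_inv_cancel : ∀ a b, s a = t b → mul (mul a b) (inv b) = a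

/-- A matched pair of quasigroupoids with common base `O`:
a left action `φA` of `H` on `A` and a right action `φH` of `A` on `H`
satisfying the module conditions and the matched pair compatibilities. -/
structure IsMatchedPair {O A1 H1 : Type*} (A : Quasigroupoid O A1) (H : Quasigroupoid O H1)
    (φA : H1 → A1 → A1) (φH : H1 → A1 → H1) : Prop where
  t_act : ∀ h a, H.s h = A.t a → A.t (φA h a) = H.t h
  act_mul : ∀ g h a, H.s g = H.t h → H.s h = A.t a → φA (H.mul g h) a = φA g (φA h a)
  act_id : ∀ a, φA (H.e (A.t a)) a = a
  s_act : ∀ h a, H.s h = A.t a → H.s (φH h a) = A.s a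
  actH_mul : ∀ h a b, H.s h = A.t a → A.s a = A.t b → φH h (A.mul a b) = φH (φH h a) b
  actH_id : ∀ h, φH h (A.e (H.s h)) = h
  compat_st : ∀ h a, H.s h = A.t a → A.s (φA h a) = H.t (φH h a)
  compat_mulA : ∀ h a b, H.s h = A.t a → A.s a = A.t b →
    φA h (A.mul a b) = A.mul (φA h a) (φA (φH h a) b)
  compat_mulH : ∀ g h a, H.s g = H.t h → H.s h = A.t a →
    φH (H.mul g h) a = H.mul (φH g (φA h a)) (φH h a)

namespace Quasigroupoid
variable {O A1 : Type*} (Q : Quasigroupoid O A1)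

theorem s_inv (a : A1) : Q.s (Q.inv a) = Q.t a := by
  have h := Q.inv_comp_left a (Q.e (Q.s a)) (Q.t_e _).symm
  rwa [Q.mul_e] at h

theorem t_inv (a : A1) : Q.t (Q.inv a) = Q.s a := by
  have h := Q.comp_inv_right (Q.e (Q.t a)) a (Q.s_e _)
  rw [Q.e_mul] at h; exact h.symm

theorem inv_mul (a : A1) : Q.mul (Q.inv a) a = Q.e (Q.s a) := by
  have h := Q.inv_mul_cancel a (Q.e (Q.s a)) (Q.t_e _).symm
  rwa [Q.mul_e] at h

theorem mul_inv (a : A1) : Q.mul a (Q.inv a) = Q.e (Q.t a) := by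
  have h := Q.mul_inv_cancel (Q.e (Q.t a)) a (Q.s_e _)
  rwa [Q.e_mul] at h

theorem idem (u : A1) (hst : Q.s u = Q.t u) (hu : Q.mul u u = u) :
    u = Q.e (Q.s u) := by
  have h := Q.inv_mul_cancel u u hst
  rw [hu, Q.inv_mul] at h
  exact h.symm

theorem e_mul_e (x : O) : Q.mul (Q.e x) (Q.e x) = Q.e x := by
  have h := Q.e_mul (Q.e x); rwa [Q.t_e] at h

end Quasigroupoid

theorem IsMatchedPair.act_e {O A1 H1 : Type*} {A : Quasigroupoid O A1}
    {H : Quasigroupoid O H1} {φA : H1 → A1 → A1} {φH : H1 → A1 → H1}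
    (hmp : IsMatchedPair A H φA φH) (h : H1) :
    φA h (A.e (H.s h)) = A.e (H.t h) := by
  have hc1 : H.s h = A.t (A.e (H.s h)) := (A.t_e _).symm
  have hmul := hmp.compat_mulA h (A.e (H.s h)) (A.e (H.s h)) hc1
    (by rw [A.s_e, A.t_e])
  rw [A.e_mul_e, hmp.actH_id] at hmul
  have hsu : A.s (φA h (A.e (H.s h))) = H.t h := by
    have h2 := hmp.compat_st h (A.e (H.s h)) hc1
    rwa [hmp.actH_id] at h2
  have htu : A.t (φA h (A.e (H.s h))) = H.t h := hmp.t_act h _ hc1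
  have h3 := A.idem _ (hsu.trans htu.symm) hmul.symm
  rwa [hsu] at h3

theorem IsMatchedPair.actH_e {O A1 H1 : Type*} {A : Quasigroupoid O A1}
    {H : Quasigroupoid O H1} {φA : H1 → A1 → A1} {φH : H1 → A1 → H1}
    (hmp : IsMatchedPair A H φA φH) (a : A1) :
    φH (H.e (A.t a)) a = H.e (A.s a) := by
  have hc1 : H.s (H.e (A.t a)) = A.t a := H.s_e _
  have hmul := hmp.compat_mulH (H.e (A.t a)) (H.e (A.t a)) a
    (by rw [H.s_e, H.t_e]) hc1
  rw [H.e_mul_e, hmp.act_id] at hmul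
  have hsv : H.s (φH (H.e (A.t a)) a) = A.s a := hmp.s_act _ a hc1
  have htv : H.t (φH (H.e (A.t a)) a) = A.s a := by
    have h2 := hmp.compat_st (H.e (A.t a)) a hc1
    rw [hmp.act_id] at h2
    exact h2.symm
  have h3 := H.idem _ (hsv.trans htv.symm) hmul.symm
  rwa [hsv] at h3

/-- For a matched pair of quasigroupoids:
`φA(λ_H(φH(h,a)), λ_A(φA(h,a))) = λ_A a` and `φH(λ_H(φH(h,a)), λ_A(φA(h,a))) = λ_H h`. -/
theorem matchedPair_double_inv {O A1 H1 : Type*}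
    (A : Quasigroupoid O A1) (H : Quasigroupoid O H1)
    (φA : H1 → A1 → A1) (φH : H1 → A1 → H1)
    (hmp : IsMatchedPair A H φA φH) (h : H1) (a : A1) (hc : H.s h = A.t a) :
    φA (H.inv (φH h a)) (A.inv (φA h a)) = A.inv a ∧
    φH (H.inv (φH h a)) (A.inv (φA h a)) = H.inv h := by
  set g := φH h a with hg
  set b := φA h a with hb
  have hsg : H.s g = A.s a := hmp.s_act h a hc
  have hsb : A.s b = H.t g := hmp.compat_st h a hc
  have htb : A.t b = H.t h := hmp.t_act h a hc
  have hca' : A.s a = A.t (A.inv a) := (A.t_inv a).symm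
  have hga : H.s g = A.t (A.inv a) := hsg.trans hca'
  -- step (*) : φA g (A.inv a) = A.inv b
  have hstar : φA g (A.inv a) = A.inv b := by
    have hm := hmp.compat_mulA h a (A.inv a) hc hca'
    rw [A.mul_inv, ← hc, hmp.act_e h] at hm
    have hcomp : A.s b = A.t (φA g (A.inv a)) := by
      rw [hmp.t_act g (A.inv a) hga]; exact hsb
    have h2 := A.inv_mul_cancel b _ hcomp
    rw [← hm] at h2
    have h4 : A.s (A.inv b) = H.t h := by rw [A.s_inv, htb]
    have h5 := A.mul_e (A.inv b)
    rw [h4] at h5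
    rw [h5] at h2
    exact h2.symm
  -- step (**) : φH g (A.inv a) = h
  have hstar2 : φH g (A.inv a) = h := by
    have hm2 := hmp.actH_mul h a (A.inv a) hc hca'
    rw [A.mul_inv, ← hc, hmp.actH_id] at hm2
    exact hm2.symm
  have hgcomp : H.s (H.inv g) = H.t g := H.s_inv g
  constructor
  · have hmA := hmp.act_mul (H.inv g) g (A.inv a) hgcomp hga
    rw [H.inv_mul, hstar, hga, hmp.act_id] at hmA
    exact hmA.symm
  · have hmH := hmp.compat_mulH (H.inv g) g (A.inv a) hgcomp hga
    rw [H.inv_mul, hstar, hstar2, hga, hmp.actH_e, A.s_inv, ← hc] at hmH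
    -- hmH : H.e (A.s (A.inv a)) = H.mul (φH (H.inv g) (A.inv b)) h
    have hcompX : H.s (H.inv g) = A.t (A.inv b) := by
      rw [A.t_inv, hsb]; exact hgcomp
    have hsX : H.s (φH (H.inv g) (A.inv b)) = H.t h := by
      rw [hmp.s_act _ _ hcompX, A.s_inv, htb]
    have h3 := H.mul_inv_cancel _ h hsX
    rw [← hmH] at h3
    have h7 := H.e_mul (H.inv h)
    rw [H.t_inv] at h7
    rw [h7] at h3
    exact h3.symm
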